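/- Let σ₀ = ½(ρ_{0+} + ρ_{0×}) and σ₁ = ½(ρ_{1+} + ρ_{1×}), where ρ_{y b} = 2^{−(n−1)} Σ_{x : ⊕x = y} U_b|x⟩⟨x|U_b† with U_+ = I^{⊗n}, U_× = H^{⊗n}, and ⊕x the XOR of the bits of x. Then ‖σ₀^{(n+2)} − σ₁^{(n+2)}‖₁ = ‖σ₀^{(n)} − σ₁^{(n)}‖₁ for all n ≥ 1. -/

import Mathlib

open Matrix
open scoped ComplexOrder

/-- The trace norm `‖A‖₁ = Tr √(AᴴA)`. -/
noncomputable def traceNorm {ι : Type*} [Fintype ι] [DecidableEq ι]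
    (A : Matrix ι ι ℂ) : ℝ :=
  (((Matrix.posSemidef_conjTranspose_mul_self A).1.eigenvectorUnitary.1 *
      diagonal (((↑) : ℝ → ℂ) ∘ (√·) ∘ (Matrix.posSemidef_conjTranspose_mul_self A).1.eigenvalues) *
      (star (Matrix.posSemidef_conjTranspose_mul_self A).1.eigenvectorUnitary : Matrix ι ι ℂ)).trace).re

/-- The `n`-fold tensor power `H^{⊗n}` of the Hadamard matrix, with entries
`H^{⊗n}(x,y) = (∏ᵢ (−1)^{xᵢ yᵢ}) / (√2)ⁿ`. -/
noncomputable def Hn (n : ℕ) : Matrix (Fin n → Bool) (Fin n → Bool) ℂ :=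
  fun x y => (∏ i, if x i && y i then (-1 : ℂ) else 1) / (Real.sqrt 2 : ℂ) ^ n

/-- The XOR of the bits of the string `x`. -/
def xorf {n : ℕ} (x : Fin n → Bool) : Bool := (List.ofFn x).foldr xor false

/-- `ρ_{y,+} = 2^{−(n−1)} Σ_{⊕x = y} |x⟩⟨x|`. -/
noncomputable def rhoXorP (n : ℕ) (y : Bool) : Matrix (Fin n → Bool) (Fin n → Bool) ℂ :=
  ((2 : ℂ) ^ (n - 1))⁻¹ •
    ∑ x ∈ Finset.univ.filter (fun x => xorf x = y), Matrix.single x x 1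

/-- `ρ_{y,×} = 2^{−(n−1)} Σ_{⊕x = y} H^{⊗n}|x⟩⟨x|H^{⊗n}†`. -/
noncomputable def rhoXorT (n : ℕ) (y : Bool) : Matrix (Fin n → Bool) (Fin n → Bool) ℂ :=
  ((2 : ℂ) ^ (n - 1))⁻¹ •
    ∑ x ∈ Finset.univ.filter (fun x => xorf x = y),
      Hn n * Matrix.single x x 1 * (Hn n)ᴴ

/-- `σ_y = ½(ρ_{y,+} + ρ_{y,×})`. -/
noncomputable def sigmaXor (n : ℕ) (y : Bool) : Matrix (Fin n → Bool) (Fin n → Bool) ℂ :=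
  (1/2 : ℂ) • (rhoXorP n y + rhoXorT n y)

-- auxiliary defs
noncomputable def eps {n : ℕ} (u : Fin n → Bool) : ℂ := if xorf u then -1 else 1

noncomputable def matA (n : ℕ) : Matrix (Fin n → Bool) (Fin n → Bool) ℂ :=
  Matrix.of fun u v => (if u = v then eps u else 0) + (if v = (fun i => !u i) then 1 else 0)

lemma xorf_succ {n : ℕ} (x : Fin (n+1) → Bool) :
    xorf x = xor (x 0) (xorf (fun i => x i.succ)) := by
  simp [xorf, List.ofFn_succ]

lemma xorf_not {n : ℕ} (x : Fin n → Bool) :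
    xorf (fun i => !x i) = xor (Nat.bodd n) (xorf x) := by
  induction n with
  | zero => simp [xorf]
  | succ m ih =>
    rw [xorf_succ, xorf_succ x, ih (fun i => x i.succ), Nat.bodd_succ]
    generalize x 0 = a
    generalize xorf (fun i => x i.succ) = b
    generalize Nat.bodd m = c
    cases a <;> cases b <;> cases c <;> rfl

lemma prod_sign {n : ℕ} (x : Fin n → Bool) :
    (∏ i, if x i then (-1 : ℂ) else 1) = (if xorf x then -1 else 1) := by
  induction n with
  | zero => simp [xorf]
  | succ m ih =>
    rw [Fin.prod_univ_succ, xorf_succ, ih (fun i => x i.succ)]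
    cases h : x 0 <;> cases h2 : xorf (fun i => x i.succ) <;> simp [h, h2]

lemma sum_filter_sub {n : ℕ} {M : Type*} [AddCommGroup M] [Module ℂ M]
    (g : (Fin n → Bool) → M) :
    (∑ x ∈ Finset.univ.filter (fun x => xorf x = false), g x)
      - (∑ x ∈ Finset.univ.filter (fun x => xorf x = true), g x)
    = ∑ x : Fin n → Bool, eps x • g x := by
  rw [Finset.sum_filter, Finset.sum_filter, ← Finset.sum_sub_distrib]
  refine Finset.sum_congr rfl fun x _ => ?_
  unfold eps
  cases h : xorf x <;> simp [h]

lemma sumP_apply {n : ℕ} (u v : Fin n → Bool) :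
    (∑ x : Fin n → Bool, eps x • Matrix.single x x (1:ℂ)) u v
      = if u = v then eps u else 0 := by
  simp only [Matrix.sum_apply, Matrix.smul_apply, Matrix.single, Matrix.of_apply,
    smul_eq_mul, mul_ite, mul_one, mul_zero]
  by_cases h : u = v
  · subst h
    simp only [and_self, if_pos rfl]
    rw [Finset.sum_ite_eq' Finset.univ u (fun x => eps x)]
    simp
  · rw [if_neg h, Finset.sum_eq_zero]
    intro x _
    rw [if_neg]
    rintro ⟨rfl, rfl⟩
    exact h rfl

lemma Hn_conj {n : ℕ} (a b : Fin n → Bool) :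
    (starRingEnd ℂ) (Hn n a b) = Hn n a b := by
  simp only [Hn, map_div₀, map_prod, map_pow, apply_ite, RingHom.map_one, map_neg,
    Complex.conj_ofReal]

lemma Hn_std_mul {n : ℕ} (x u v : Fin n → Bool) :
    (Hn n * Matrix.single x x (1:ℂ) * (Hn n)ᴴ) u v
      = Hn n u x * Hn n v x := by
  rw [Matrix.mul_apply]
  have key : ∀ b, (Hn n * Matrix.single x x (1:ℂ)) u b
      = if b = x then Hn n u x else 0 := by
    intro b
    rw [Matrix.mul_apply]
    simp only [Matrix.single, Matrix.of_apply, mul_ite, mul_one, mul_zero]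
    by_cases hb : b = x
    · rw [if_pos hb, Finset.sum_eq_single x]
      · rw [if_pos ⟨rfl, hb.symm⟩]
      · intro c _ hcx
        rw [if_neg]
        rintro ⟨h, -⟩
        exact hcx h.symm
      · intro h
        exact absurd (Finset.mem_univ x) h
    · rw [if_neg hb, Finset.sum_eq_zero]
      intro c _
      rw [if_neg]
      rintro ⟨-, h⟩
      exact hb h.symm
  simp only [key, ite_mul, zero_mul]
  rw [Finset.sum_ite_eq' Finset.univ x]
  simp [Matrix.conjTranspose_apply, Hn_conj]

lemma sqrt2_pow_mul {n : ℕ} : ((Real.sqrt 2 : ℂ) ^ n) * ((Real.sqrt 2 : ℂ) ^ n) = 2 ^ n := by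
  rw [← pow_add, ← two_mul, pow_mul]
  norm_num
  rw [show ((Real.sqrt 2 : ℂ))^2 = ((Real.sqrt 2 ^ 2 : ℝ) : ℂ) by push_cast; ring,
    Real.sq_sqrt (by norm_num)]
  norm_num

lemma sumT_apply {n : ℕ} (u v : Fin n → Bool) :
    (∑ x : Fin n → Bool, eps x * (Hn n u x * Hn n v x))
      = if v = (fun i => !u i) then 1 else 0 := by
  have h2 : ((2:ℂ) ^ n) ≠ 0 := by positivity
  have step : ∀ x : Fin n → Bool, eps x * (Hn n u x * Hn n v x)
      = (∏ i, ((if x i then (-1:ℂ) else 1) *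
          ((if u i && x i then (-1:ℂ) else 1) * (if v i && x i then (-1:ℂ) else 1)))) / 2 ^ n := by
    intro x
    unfold eps
    rw [← prod_sign x]
    simp only [Hn, Finset.prod_mul_distrib]
    rw [div_mul_div_comm, sqrt2_pow_mul]
    ring
  simp only [step, ← Finset.sum_div]
  rw [← Fintype.prod_sum (fun i b => ((if b then (-1:ℂ) else 1) *
          ((if u i && b then (-1:ℂ) else 1) * (if v i && b then (-1:ℂ) else 1))))]
  have factor : ∀ i, (∑ b : Bool, ((if b then (-1:ℂ) else 1) *
          ((if u i && b then (-1:ℂ) else 1) * (if v i && b then (-1:ℂ) else 1))))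
      = if v i = !u i then 2 else 0 := by
    intro i
    rw [Fintype.sum_bool]
    cases hu : u i <;> cases hv : v i <;> norm_num
  rw [Finset.prod_congr rfl (fun i _ => factor i)]
  by_cases h : v = fun i => !u i
  · rw [if_pos h]
    have hp : (∏ _i : Fin n, (2:ℂ)) = 2 ^ n := by simp
    rw [Finset.prod_congr rfl (fun i _ => if_pos (by rw [h] : v i = !u i)), hp, div_self h2]
  · rw [if_neg h]
    obtain ⟨i, hi⟩ : ∃ i, ¬ (v i = !u i) := by
      by_contra hc
      push_neg at hc
      exact h (funext hc)
    rw [Finset.prod_eq_zero (Finset.mem_univ i), zero_div]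
    rw [if_neg hi]

lemma delta_eq {n : ℕ} (hn : 1 ≤ n) :
    sigmaXor n false - sigmaXor n true = ((2:ℂ)^n)⁻¹ • matA n := by
  have h2n : (2:ℂ)^n = 2^(n-1) * 2 := by rw [← pow_succ, Nat.sub_add_cancel hn]
  have hc : (1/2 : ℂ) * ((2:ℂ) ^ (n-1))⁻¹ = ((2:ℂ)^n)⁻¹ := by
    rw [h2n, mul_inv]; ring
  have key : sigmaXor n false - sigmaXor n true
      = ((2:ℂ)^n)⁻¹ • ((∑ x : Fin n → Bool, eps x • Matrix.single x x (1:ℂ))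
          + (∑ x : Fin n → Bool, eps x • (Hn n * Matrix.single x x 1 * (Hn n)ᴴ))) := by
    rw [← sum_filter_sub, ← sum_filter_sub, ← hc]
    unfold sigmaXor rhoXorP rhoXorT
    module
  rw [key]
  ext u v
  simp only [Matrix.smul_apply, Matrix.add_apply, matA, Matrix.of_apply, smul_eq_mul]
  congr 1
  rw [Matrix.sum_apply, Matrix.sum_apply]
  congr 1
  · simpa only [Matrix.sum_apply] using sumP_apply u v
  · have hstep : ∀ x : Fin n → Bool,
        ((eps x • (Hn n * Matrix.single x x 1 * (Hn n)ᴴ) :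
            Matrix (Fin n → Bool) (Fin n → Bool) ℂ)) u v
          = eps x * (Hn n u x * Hn n v x) := fun x => by
      rw [Matrix.smul_apply, Hn_std_mul, smul_eq_mul]
    rw [Finset.sum_congr rfl fun x _ => hstep x]
    exact sumT_apply u v

noncomputable def matB (n : ℕ) : Matrix (Fin n → Bool) (Fin n → Bool) ℂ :=
  Matrix.of fun u v => if v = (fun i => !u i) then eps u else 0

lemma eps_sq {n : ℕ} (u : Fin n → Bool) : eps u * eps u = 1 := by
  unfold eps
  split <;> norm_num

lemma eps_not {n : ℕ} (u : Fin n → Bool) :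
    eps (fun i => !u i) = if Nat.bodd n then -eps u else eps u := by
  unfold eps
  rw [xorf_not]
  cases h : Nat.bodd n <;> cases h2 : xorf u <;> simp [h, h2]

lemma matA_sq (n : ℕ) : matA n * matA n
    = (2:ℂ) • 1 + Matrix.of (fun u v : Fin n → Bool =>
        if v = (fun i => !u i) then eps u + eps (fun i => !u i) else 0) := by
  ext u v
  rw [Matrix.mul_apply]
  simp only [matA, Matrix.of_apply, add_mul, mul_add, Finset.sum_add_distrib, ite_mul, mul_ite,
    zero_mul, mul_zero, mul_one, one_mul, Finset.sum_ite_eq, Finset.sum_ite_eq',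
    Finset.mem_univ, if_true, Bool.not_not]
  have hsw : ∀ x : Fin n → Bool, (v = fun i => !x i) ↔ (x = fun i => !v i) := by
    intro x
    constructor <;> rintro rfl <;> funext i <;> simp
  simp only [hsw, Finset.sum_ite_eq', Finset.mem_univ, if_true]
  have h1 : ((u = fun i => !v i)) ↔ (v = fun i => !u i) := (hsw u).symm
  have h2 : ((fun i => !v i) = fun i => !u i) ↔ v = u := by
    constructor
    · intro h
      funext i
      have := congrFun h i
      simpa using this
    · rintro rfl; rfl
  simp only [Matrix.add_apply, Matrix.smul_apply, Matrix.one_apply, Matrix.of_apply, smul_eq_mul]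
  have epsq : ∀ w : Fin n → Bool, eps w * eps w = 1 := by
    intro w
    unfold eps
    split <;> norm_num
  by_cases huv : u = v <;> by_cases hv : v = fun i => !u i
  · subst huv
    rw [epsq, ← hv]
    simp
    ring
  · subst huv
    rw [epsq]
    simp [if_neg hv]
    ring
  · have hvu : (fun i => !v i) = u := by
      rw [hv]
      funext i
      simp
    rw [if_pos (h1.mpr hv), ← hv, hvu, if_neg huv, if_neg (fun h : u = v => huv h), if_pos rfl, if_pos rfl]
    ring
  · rw [if_neg (fun h => hv (h1.mp h)), if_neg (fun h => huv (h2.mp h).symm), if_neg huv,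
      if_neg hv, if_neg huv]
    simp only [add_zero, zero_add, zero_mul, mul_zero]
    exact if_neg (fun h => hv (h1.mp h))

lemma not_swap {n : ℕ} (u v : Fin n → Bool) :
    (u = fun i => !v i) ↔ (v = fun i => !u i) := by
  constructor <;> rintro rfl <;> funext i <;> simp

lemma eps_conj {n : ℕ} (u : Fin n → Bool) : (starRingEnd ℂ) (eps u) = eps u := by
  unfold eps
  split <;> simp

lemma eps_star {n : ℕ} (u : Fin n → Bool) : star (eps u) = eps u := eps_conj u

lemma eps_not_even {n : ℕ} (hpar : Nat.bodd n = false) (u : Fin n → Bool) :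
    eps (fun i => !u i) = eps u := by
  rw [eps_not, hpar]
  simp

lemma matA_herm (n : ℕ) : (matA n)ᴴ = matA n := by
  ext u v
  simp only [Matrix.conjTranspose_apply, matA, Matrix.of_apply, star_add]
  congr 1
  · by_cases h : u = v
    · subst h; simp [eps_conj]
    · rw [if_neg h, if_neg (fun hh => h hh.symm)]
      simp
  · by_cases h : u = fun i => !v i
    · rw [if_pos h, if_pos ((not_swap u v).mp h)]
      simp
    · rw [if_neg h, if_neg (fun hh => h ((not_swap u v).mpr hh))]
      simp

lemma matB_herm {n : ℕ} (hpar : Nat.bodd n = false) : (matB n)ᴴ = matB n := by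
  ext u v
  simp only [Matrix.conjTranspose_apply, matB, Matrix.of_apply]
  by_cases h : u = fun i => !v i
  · rw [if_pos h, if_pos ((not_swap u v).mp h)]
    have hvu : eps v = eps u := by
      rw [(not_swap u v).mp h, eps_not_even hpar]
    rw [eps_star, hvu]
  · rw [if_neg h, if_neg (fun hh => h ((not_swap u v).mpr hh))]
    simp

lemma matB_sq {n : ℕ} (hpar : Nat.bodd n = false) : matB n * matB n = 1 := by
  ext u v
  rw [Matrix.mul_apply]
  simp only [matB, Matrix.of_apply, ite_mul, zero_mul]
  rw [Finset.sum_eq_single (fun i => !u i)]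
  · rw [if_pos rfl]
    by_cases h : u = v
    · subst h
      rw [if_pos (by funext i; simp), Matrix.one_apply_eq,
        eps_not_even hpar, eps_sq]
    · rw [if_neg (fun hc => h (by
          funext i
          have := congrFun hc i
          simp at this
          exact this.symm)), mul_zero,
        Matrix.one_apply_ne h]
  · intro b _ hb
    rw [if_neg hb]
  · intro h
    exact absurd (Finset.mem_univ _) h

open scoped MatrixOrder in
lemma traceNorm_eq_of_sqrt {ι : Type*} [Fintype ι] [DecidableEq ι]
    (A S : Matrix ι ι ℂ) (hS : S.PosSemidef) (h : S ^ 2 = Aᴴ * A) :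
    traceNorm A = S.trace.re := by
  unfold traceNorm
  have hA := Matrix.posSemidef_conjTranspose_mul_self A
  have h2 : CFC.sqrt (Aᴴ * A) = cfc Real.sqrt (Aᴴ * A) := by
    rw [CFC.sqrt_eq_cfc, cfc_nnreal_eq_real (a := Aᴴ * A) _ hA.nonneg]
    congr 1
    funext x
    rw [Real.sqrt]
  have h3 : CFC.sqrt (Aᴴ * A) = S := CFC.sqrt_unique (by rw [← h, sq]) hS.nonneg
  rw [← h3, h2, hA.1.cfc_eq, IsHermitian.cfc, Unitary.conjStarAlgAut_apply]
  rfl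

lemma posSemidef_real_smul {ι : Type*} [Fintype ι] {M : Matrix ι ι ℂ}
    (hM : M.PosSemidef) {r : ℝ} (hr : 0 ≤ r) : (((r : ℂ)) • M).PosSemidef := by
  constructor
  · show ((r : ℂ) • M)ᴴ = (r : ℂ) • M
    rw [Matrix.conjTranspose_smul, hM.1]
    congr 1
    simp
  · exact (hM.smul (Complex.zero_le_real.mpr hr)).2

lemma card_bool_fun (n : ℕ) : Fintype.card (Fin n → Bool) = 2 ^ n := by
  simp

lemma traceNorm_delta {n : ℕ} (hn : 1 ≤ n) :
    traceNorm (sigmaXor n false - sigmaXor n true)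
      = if Nat.bodd n then Real.sqrt 2 else 1 := by
  have hcast : ((2:ℂ)^n)⁻¹ = ((((2:ℝ)^n)⁻¹ : ℝ) : ℂ) := by push_cast; rfl
  set c : ℝ := ((2:ℝ)^n)⁻¹ with hc
  have hc0 : 0 ≤ c := by positivity
  have hAconj : ((c:ℂ) • matA n)ᴴ = (c:ℂ) • matA n := by
    rw [Matrix.conjTranspose_smul, matA_herm]
    congr 1
    simp
  cases hpar : Nat.bodd n with
  | true =>
    -- odd case
    have hsum : ∀ u : Fin n → Bool, eps u + eps (fun i => !u i) = 0 := by
      intro u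
      rw [eps_not, hpar]
      simp
    have hAsq : matA n * matA n = (2:ℂ) • 1 := by
      rw [matA_sq]
      have : Matrix.of (fun u v : Fin n → Bool =>
          if v = (fun i => !u i) then eps u + eps (fun i => !u i) else 0) = 0 := by
        ext u v
        simp only [Matrix.of_apply, Matrix.zero_apply, hsum]
        split <;> rfl
      rw [this, add_zero]
    set S : Matrix (Fin n → Bool) (Fin n → Bool) ℂ := ((Real.sqrt 2 * c : ℝ) : ℂ) • 1 with hS
    have hSpsd : S.PosSemidef :=
      posSemidef_real_smul Matrix.PosSemidef.one (by positivity)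
    have hSsq : S ^ 2 = ((c:ℂ) • matA n)ᴴ * ((c:ℂ) • matA n) := by
      rw [hAconj, Matrix.smul_mul, Matrix.mul_smul, smul_smul, hAsq, hS]
      rw [pow_two, Matrix.smul_mul, Matrix.mul_smul, smul_smul, one_mul, smul_smul]
      congr 1
      rw [← Complex.ofReal_mul, mul_mul_mul_comm, Real.mul_self_sqrt (by norm_num)]
      push_cast
      ring
    rw [delta_eq hn, hcast, traceNorm_eq_of_sqrt _ S hSpsd hSsq, hS]
    rw [Matrix.trace_smul, Matrix.trace_one, card_bool_fun]
    simp only [smul_eq_mul, if_pos rfl]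
    have : (((Real.sqrt 2 * c : ℝ)) : ℂ) * ((2^n : ℕ) : ℂ) = ((Real.sqrt 2 * c * 2^n : ℝ) : ℂ) := by
      push_cast
      ring
    rw [this, Complex.ofReal_re, hc, mul_assoc, inv_mul_cancel₀ (by positivity), mul_one]
    simp
  | false =>
    have hB : Matrix.of (fun u v : Fin n → Bool =>
        if v = (fun i => !u i) then eps u + eps (fun i => !u i) else 0) = (2:ℂ) • matB n := by
      ext u v
      simp only [Matrix.of_apply, Matrix.smul_apply, matB, smul_eq_mul, eps_not_even hpar]
      split <;> ring
    have hAsq : matA n * matA n = (2:ℂ) • (1 + matB n) := by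
      rw [matA_sq, hB, smul_add]
    have hBB : (1 + matB n) * (1 + matB n) = (2:ℂ) • (1 + matB n) := by
      rw [add_mul, mul_add, mul_add]
      simp only [one_mul, mul_one, matB_sq hpar]
      rw [smul_add, two_smul, two_smul]
      abel
    set S : Matrix (Fin n → Bool) (Fin n → Bool) ℂ := (c : ℂ) • (1 + matB n) with hS
    have hSpsd : S.PosSemidef := by
      have hherm : (1 + matB n)ᴴ = 1 + matB n := by
        rw [Matrix.conjTranspose_add, Matrix.conjTranspose_one, matB_herm hpar]
      have : S = ((c/2 : ℝ) : ℂ) • ((1 + matB n)ᴴ * (1 + matB n)) := by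
        rw [hherm, hBB, smul_smul, hS]
        congr 1
        push_cast
        ring
      rw [this]
      exact posSemidef_real_smul (Matrix.posSemidef_conjTranspose_mul_self _) (by positivity)
    have hSsq : S ^ 2 = ((c:ℂ) • matA n)ᴴ * ((c:ℂ) • matA n) := by
      rw [hAconj, Matrix.smul_mul, Matrix.mul_smul, smul_smul, hAsq, hS,
        pow_two, Matrix.smul_mul, Matrix.mul_smul, smul_smul, hBB, smul_smul]
    have htrB : (matB n).trace = 0 := by
      unfold Matrix.trace
      rw [Finset.sum_eq_zero]
      intro u _
      simp only [Matrix.diag_apply, matB, Matrix.of_apply]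
      rw [if_neg]
      intro hcon
      have := congrFun hcon ⟨0, hn⟩
      simp at this
    rw [delta_eq hn, hcast, traceNorm_eq_of_sqrt _ S hSpsd hSsq, hS]
    rw [Matrix.trace_smul, Matrix.trace_add, Matrix.trace_one, htrB, add_zero, card_bool_fun]
    simp only [smul_eq_mul, Bool.false_eq_true, if_false]
    have : ((c : ℝ) : ℂ) * ((2^n : ℕ) : ℂ) = ((c * 2^n : ℝ) : ℂ) := by
      push_cast
      ring
    rw [this, Complex.ofReal_re, hc, inv_mul_cancel₀ (by positivity)]

/-- The trace distance for the XOR discrimination problem is the same for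
strings of length `n` and length `n + 2`. -/
theorem traceNorm_sigmaXor_succ_succ {n : ℕ} (hn : 1 ≤ n) :
    traceNorm (sigmaXor (n + 2) false - sigmaXor (n + 2) true)
      = traceNorm (sigmaXor n false - sigmaXor n true) := by
  rw [traceNorm_delta (by omega : 1 ≤ n + 2), traceNorm_delta hn]
  congr 1
  simp [Nat.bodd_add]
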